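/- Assume (H2): ±i are simple eigenvalues of A, i.e. dim 𝒩(i−A_c) = 1 = codim ℛ(i−A_c) and every nonzero ψ ∈ 𝒩(i−A_c) satisfies ψ ∉ ℛ(i−A_c); and assume (H4): ik belongs to the resolvent set ρ(A_c) for every k ∈ ℤ ∖ {−1,1}. Then iℤ ⊆ ρ(A♯), i.e. for every n ∈ ℤ the operator in − A♯ is a bijection from V♯ ∩ 𝒟(A_c) onto V♯ with bounded inverse. -/

import Mathlib

open Real Filter Set Function MeasureTheory
open scoped ENNReal

noncomputable section

namespace HopfStmt

/-- The sup part of the periodic Hölder norm. -/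
def supN {E : Type*} [NormedAddCommGroup E] (u : ℝ → E) : ℝ := ⨆ t : ℝ, ‖u t‖

/-- The Hölder seminorm part. -/
def holS {E : Type*} [NormedAddCommGroup E] (β : ℝ) (u : ℝ → E) : ℝ :=
  ⨆ p : ℝ × ℝ, ‖u p.1 - u p.2‖ / |p.1 - p.2| ^ β

/-- The norm of `C^β_{2π}(ℝ, E)`. -/
def holderN {E : Type*} [NormedAddCommGroup E] (β : ℝ) (u : ℝ → E) : ℝ :=
  supN u + holS β u

/-- Membership in `C^β_{2π}(ℝ, E)`: `2π`-periodic and `β`-Hölder continuous. -/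
def MemHolder {E : Type*} [NormedAddCommGroup E] (β : ℝ) (u : ℝ → E) : Prop :=
  Function.Periodic u (2 * π) ∧ ∃ C : ℝ, ∀ s t : ℝ, ‖u s - u t‖ ≤ C * |s - t| ^ β

/-- Membership in the span of the first cosine and sine modes: `w = a ⊗ c₁ + b ⊗ s₁`. -/
def memSp1 {E : Type*} [AddCommGroup E] [Module ℝ E] (w : ℝ → E) : Prop :=
  ∃ a b : E, ∀ t : ℝ, w t = Real.cos t • a + Real.sin t • b

/-- `L₁ ψ := Re (ψ ⊗ e₁)`, i.e. `(L₁ψ)(t) = cos t • ψ₁ - sin t • ψ₂` for `ψ = ψ₁ + iψ₂`. -/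
def L1 {E : Type*} [AddCommGroup E] [Module ℝ E] (ψ : E × E) : ℝ → E :=
  fun t => Real.cos t • ψ.1 - Real.sin t • ψ.2

/-- Multiplication by the complex scalar `c` on the complexification `E_c = E × E`. -/
def csmul {E : Type*} [AddCommGroup E] [Module ℝ E] (c : ℂ) (x : E × E) : E × E :=
  (c.re • x.1 - c.im • x.2, c.im • x.1 + c.re • x.2)

/-- Complex conjugation on the complexification. -/
def conjC {E : Type*} [AddCommGroup E] (x : E × E) : E × E := (x.1, -x.2)

variable {V : Type*} [NormedAddCommGroup V] [NormedSpace ℝ V]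
variable {U : Type*} [NormedAddCommGroup U] [NormedSpace ℝ U]

/-- The complexified inclusion `ι_c : U_c → V_c`. -/
def iotaC (ι : U →L[ℝ] V) (ψ : U × U) : V × V := (ι ψ.1, ι ψ.2)

/-- The complexified operator `A_c : U_c → V_c`. -/
def AcC (A : U →L[ℝ] V) (ψ : U × U) : V × V := (A ψ.1, A ψ.2)

/-- The operator `c - A_c : U_c → V_c` for a complex scalar `c`. -/
def cMinusA (ι A : U →L[ℝ] V) (c : ℂ) (ψ : U × U) : V × V :=
  csmul c (iotaC ι ψ) - AcC A ψ

/-- The kernel `𝒩(i - A_c) ⊆ U_c`. -/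
def kerIA (ι A : U →L[ℝ] V) : Set (U × U) := {ψ | cMinusA ι A Complex.I ψ = 0}

/-- The range `ℛ(i - A_c) ⊆ V_c`. -/
def ranIA (ι A : U →L[ℝ] V) : Set (V × V) := Set.range (cMinusA ι A Complex.I)

/-- `V♯ := ℛ(i - A_c) ∩ ℛ(-i - A_c)`. -/
def Vsharp (ι A : U →L[ℝ] V) : Set (V × V) :=
  Set.range (cMinusA ι A Complex.I) ∩ Set.range (cMinusA ι A (-Complex.I))

/-- The `V`-valued time derivative of `w : ℝ → U` (through the inclusion `ι`). -/
def Xder (ι : U →L[ℝ] V) (w : ℝ → U) : ℝ → V := fun t => deriv (fun s => ι (w s)) t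

/-- Membership in `X := C^{1+β}_{2π}(ℝ,V) ∩ C^β_{2π}(ℝ,U)`. -/
def MemX (β : ℝ) (ι : U →L[ℝ] V) (w : ℝ → U) : Prop :=
  MemHolder β w ∧ (∀ t : ℝ, DifferentiableAt ℝ (fun s => ι (w s)) t) ∧
    MemHolder β (Xder ι w)

/-- The norm of `X`: `‖w‖_X = ‖w‖_{V,1+β} + ‖w‖_{U,β}`. -/
def normX (β : ℝ) (ι : U →L[ℝ] V) (w : ℝ → U) : ℝ :=
  (holderN β (fun t => ι (w t)) + holderN β (Xder ι w)) + holderN β w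

/-- `T₁ w := ẇ - A w`. -/
def T1op (ι A : U →L[ℝ] V) (w : ℝ → U) : ℝ → V := fun t => Xder ι w t - A (w t)

/-- Hypothesis (H2): `±i` are simple eigenvalues of `A`, i.e.
`dim 𝒩(i - A_c) = 1 = codim ℛ(i - A_c)` and nonzero kernel elements do not lie in the range. -/
def H2hyp (ι A : U →L[ℝ] V) : Prop :=
  (∃ ψ ∈ kerIA ι A, ψ ≠ 0 ∧ ∀ φ ∈ kerIA ι A, ∃ c : ℂ, φ = csmul c ψ) ∧
  (∃ χ : V × V, χ ∉ ranIA ι A ∧ ∀ v : V × V, ∃ c : ℂ, ∃ r ∈ ranIA ι A, v = r + csmul c χ) ∧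
  (∀ ψ ∈ kerIA ι A, ψ ≠ 0 → iotaC ι ψ ∉ ranIA ι A)

/-- Hypothesis (H4): `ik ∈ ρ(A_c)` for `k ∈ ℤ \ {-1, 1}`. -/
def H4hyp (ι A : U →L[ℝ] V) : Prop :=
  ∀ k : ℤ, k ≠ 1 → k ≠ -1 → Function.Bijective (cMinusA ι A (Complex.I * (k : ℂ)))

/-- Hypothesis (H5): `‖(in - A_c)⁻¹‖ ≤ M / n` for `n = 2, 3, 4, ...`. -/
def H5hyp (ι A : U →L[ℝ] V) : Prop :=
  ∃ M : ℝ, 0 < M ∧ ∀ n : ℕ, 2 ≤ n →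
    ∀ ψ : U × U, (n : ℝ) * ‖iotaC ι ψ‖ ≤ M * ‖cMinusA ι A (Complex.I * (n : ℂ)) ψ‖

/-- Hypothesis (H3): the eigenvalue branch `μ(λ)` of `A_c + (h_u(λ,0))_c` through `μ(0) = i`
satisfies the transversality condition `Re μ'(0) ≠ 0`. -/
def H3hyp (ι A : U →L[ℝ] V) (h : ℝ → U → V) : Prop :=
  ∃ (ε : ℝ) (μ : ℝ → ℂ) (ψb : ℝ → U × U) (μ' : ℂ), 0 < ε ∧
    μ 0 = Complex.I ∧ ψb 0 ∈ kerIA ι A ∧ ψb 0 ≠ 0 ∧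
    ContinuousOn ψb (Metric.ball (0 : ℝ) ε) ∧
    (∀ lam ∈ Metric.ball (0 : ℝ) ε,
      AcC A (ψb lam) + (fderiv ℝ (h lam) 0 (ψb lam).1, fderiv ℝ (h lam) 0 (ψb lam).2)
        = csmul (μ lam) (iotaC ι (ψb lam))) ∧
    HasDerivAt μ μ' 0 ∧ μ'.re ≠ 0

/-- Unbundled notion: `f : (E, NE) → (F, NF)` is of class `C²` on `D` (Fréchet sense). -/
def UFC2On {E F : Type*} [AddCommGroup E] [Module ℝ E] [AddCommGroup F] [Module ℝ F]
    (NE : E → ℝ) (NF : F → ℝ) (D : Set E) (f : E → F) : Prop :=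
  ∃ (D1 : E → E → F) (D2 : E → E → E → F),
    (∀ x ∈ D, IsLinearMap ℝ (D1 x) ∧ ∃ C : ℝ, ∀ e, NF (D1 x e) ≤ C * NE e) ∧
    (∀ x ∈ D, ∀ ε > (0 : ℝ), ∃ d > (0 : ℝ), ∀ y ∈ D, NE (y - x) < d →
      NF (f y - f x - D1 x (y - x)) ≤ ε * NE (y - x)) ∧
    (∀ x ∈ D, (∀ e, IsLinearMap ℝ (D2 x e)) ∧ (∀ e', IsLinearMap ℝ (fun e => D2 x e e')) ∧
      ∃ C : ℝ, ∀ e e', NF (D2 x e e') ≤ C * NE e * NE e') ∧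
    (∀ x ∈ D, ∀ ε > (0 : ℝ), ∃ d > (0 : ℝ), ∀ y ∈ D, NE (y - x) < d →
      ∀ e, NF (D1 y e - D1 x e - D2 x (y - x) e) ≤ ε * NE (y - x) * NE e) ∧
    (∀ x ∈ D, ∀ ε > (0 : ℝ), ∃ d > (0 : ℝ), ∀ y ∈ D, NE (y - x) < d →
      ∀ e e', NF (D2 y e e' - D2 x e e') ≤ ε * NE e * NE e')

/-- Unbundled notion: `f : ℝ → (E, NE)` is `C¹` on `s` with derivative `f'`. -/
def UC1On {E : Type*} [AddCommGroup E] [Module ℝ E] (NE : E → ℝ) (s : Set ℝ)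
    (f f' : ℝ → E) : Prop :=
  (∀ a ∈ s, ∀ ε > (0 : ℝ), ∃ d > (0 : ℝ), ∀ b ∈ s, |b - a| < d →
    NE (f b - f a - (b - a) • f' a) ≤ ε * |b - a|) ∧
  (∀ a ∈ s, ∀ ε > (0 : ℝ), ∃ d > (0 : ℝ), ∀ b ∈ s, |b - a| < d → NE (f' b - f' a) ≤ ε)


/-! ### Auxiliary development for Proposition 3.4 (iii) -/

section CsmulAlgebra

variable {W : Type*} [AddCommGroup W] [Module ℝ W]

lemma csmul_add' (c : ℂ) (x y : W × W) : csmul c (x + y) = csmul c x + csmul c y := by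
  simp only [csmul, Prod.ext_iff, Prod.fst_add, Prod.snd_add, smul_add]
  constructor <;> abel

lemma csmul_sub' (c : ℂ) (x y : W × W) : csmul c (x - y) = csmul c x - csmul c y := by
  simp only [csmul, Prod.ext_iff, Prod.fst_sub, Prod.snd_sub, smul_sub]
  constructor <;> abel

lemma csmul_zero' (c : ℂ) : csmul c (0 : W × W) = 0 := by
  simp [csmul]

lemma csmul_rsmul (c : ℂ) (r : ℝ) (x : W × W) : csmul c (r • x) = r • csmul c x := by
  simp only [csmul, Prod.ext_iff, Prod.smul_fst, Prod.smul_snd, smul_sub, smul_add]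
  constructor <;> rw [smul_comm r, smul_comm r]

lemma csmul_csmul (c d : ℂ) (x : W × W) : csmul c (csmul d x) = csmul (c * d) x := by
  simp only [csmul, Prod.ext_iff, Complex.mul_re, Complex.mul_im]
  constructor <;> module

lemma one_csmul (x : W × W) : csmul 1 x = x := by
  simp [csmul]

lemma zero_csmul (x : W × W) : csmul 0 x = 0 := by
  simp [csmul]

lemma real_csmul (r : ℝ) (x : W × W) : csmul (r : ℂ) x = r • x := by
  simp [csmul, Prod.ext_iff]

lemma csmul_eq_smul_add (c : ℂ) (x : W × W) :
    csmul c x = c.re • x + c.im • csmul Complex.I x := by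
  simp only [csmul, Complex.I_re, Complex.I_im, Prod.ext_iff, Prod.smul_fst, Prod.smul_snd,
    Prod.fst_add, Prod.snd_add]
  constructor <;> module

lemma conjC_add' (x y : W × W) : conjC (x + y) = conjC x + conjC y := by
  simp [conjC, Prod.ext_iff]; abel

lemma conjC_sub' (x y : W × W) : conjC (x - y) = conjC x - conjC y := by
  simp [conjC, Prod.ext_iff]; abel

lemma conjC_conjC (x : W × W) : conjC (conjC x) = x := by
  simp [conjC]

lemma conjC_zero : conjC (0 : W × W) = 0 := by simp [conjC]

lemma conjC_eq_zero {x : W × W} (h : conjC x = 0) : x = 0 := by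
  rw [← conjC_conjC x, h, conjC_zero]

lemma conjC_csmul (c : ℂ) (x : W × W) :
    conjC (csmul c x) = csmul (starRingEnd ℂ c) (conjC x) := by
  simp only [conjC, csmul, Complex.conj_re, Complex.conj_im, Prod.ext_iff]
  constructor <;> module

end CsmulAlgebra

section NormedCsmul

variable {V : Type*} [NormedAddCommGroup V] [NormedSpace ℝ V]

lemma norm_conjC (x : V × V) : ‖conjC x‖ = ‖x‖ := by
  simp [conjC, Prod.norm_def]

lemma norm_csmul_I (x : V × V) : ‖csmul Complex.I x‖ = ‖x‖ := by
  simp [csmul, Prod.norm_def, max_comm]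

lemma norm_csmul_le (c : ℂ) (x : V × V) : ‖csmul c x‖ ≤ 2 * ‖c‖ * ‖x‖ := by
  have h1 : ‖x.1‖ ≤ ‖x‖ := norm_fst_le x
  have h2 : ‖x.2‖ ≤ ‖x‖ := norm_snd_le x
  have hre : |c.re| ≤ ‖c‖ := Complex.abs_re_le_norm c
  have him : |c.im| ≤ ‖c‖ := Complex.abs_im_le_norm c
  have key : ∀ a b : V, ‖a‖ ≤ ‖x‖ → ‖b‖ ≤ ‖x‖ →
      ‖c.re • a - c.im • b‖ ≤ 2 * ‖c‖ * ‖x‖ := by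
    intro a b ha hb
    calc ‖c.re • a - c.im • b‖ ≤ ‖c.re • a‖ + ‖c.im • b‖ := norm_sub_le _ _
      _ = |c.re| * ‖a‖ + |c.im| * ‖b‖ := by
          rw [norm_smul, norm_smul, Real.norm_eq_abs, Real.norm_eq_abs]
      _ ≤ ‖c‖ * ‖x‖ + ‖c‖ * ‖x‖ := by
          gcongr <;> first | exact hre | exact him | exact (norm_nonneg c)
      _ = 2 * ‖c‖ * ‖x‖ := by ring
  have k1 := key x.1 x.2 h1 h2
  have k2 : ‖c.im • x.1 + c.re • x.2‖ ≤ 2 * ‖c‖ * ‖x‖ := by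
    calc ‖c.im • x.1 + c.re • x.2‖ ≤ ‖c.im • x.1‖ + ‖c.re • x.2‖ := norm_add_le _ _
      _ = |c.im| * ‖x.1‖ + |c.re| * ‖x.2‖ := by
          rw [norm_smul, norm_smul, Real.norm_eq_abs, Real.norm_eq_abs]
      _ ≤ ‖c‖ * ‖x‖ + ‖c‖ * ‖x‖ := by
          gcongr <;> first | exact hre | exact him | exact (norm_nonneg c)
      _ = 2 * ‖c‖ * ‖x‖ := by ring
  rw [show csmul c x = (c.re • x.1 - c.im • x.2, c.im • x.1 + c.re • x.2) from rfl,
    Prod.norm_def]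
  exact max_le k1 k2

/-- Multiplication by `c` as a continuous linear map. -/
def csmulL (c : ℂ) : V × V →L[ℝ] V × V :=
  (c.re • ContinuousLinearMap.fst ℝ V V - c.im • ContinuousLinearMap.snd ℝ V V).prod
  (c.im • ContinuousLinearMap.fst ℝ V V + c.re • ContinuousLinearMap.snd ℝ V V)

lemma csmulL_apply (c : ℂ) (x : V × V) : csmulL c x = csmul c x := rfl

/-- The complexification of `T`. -/
def TcL (T : V →L[ℝ] V) : V × V →L[ℝ] V × V := T.prodMap T

lemma TcL_apply (T : V →L[ℝ] V) (x : V × V) : TcL T x = (T x.1, T x.2) := rfl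

lemma TcL_csmul (T : V →L[ℝ] V) (c : ℂ) (x : V × V) :
    TcL T (csmul c x) = csmul c (TcL T x) := by
  simp [TcL_apply, csmul, Prod.ext_iff]

lemma TcL_conjC (T : V →L[ℝ] V) (x : V × V) : TcL T (conjC x) = conjC (TcL T x) := by
  simp [TcL_apply, conjC, Prod.ext_iff]

/-- The operator `B_c := c T_c - 1` on `V × V`. -/
def BopL (T : V →L[ℝ] V) (c : ℂ) : V × V →L[ℝ] V × V :=
  (csmulL c).comp (TcL T) - ContinuousLinearMap.id ℝ (V × V)

lemma BopL_apply (T : V →L[ℝ] V) (c : ℂ) (x : V × V) :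
    BopL T c x = csmul c (TcL T x) - x := rfl

lemma BopL_csmul (T : V →L[ℝ] V) (c d : ℂ) (x : V × V) :
    BopL T c (csmul d x) = csmul d (BopL T c x) := by
  rw [BopL_apply, BopL_apply, TcL_csmul, csmul_sub', csmul_csmul, csmul_csmul, mul_comm c d]

lemma BopL_conjC (T : V →L[ℝ] V) (c : ℂ) (x : V × V) :
    BopL T c (conjC x) = conjC (BopL T (starRingEnd ℂ c) x) := by
  rw [BopL_apply, BopL_apply, conjC_sub', TcL_conjC, conjC_csmul,
    Complex.conj_conj]

lemma BopL_comm (T : V →L[ℝ] V) (c d : ℂ) (x : V × V) :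
    BopL T c (BopL T d x) = BopL T d (BopL T c x) := by
  simp only [BopL_apply, map_sub, TcL_csmul, csmul_sub', csmul_csmul]
  rw [mul_comm c d]
  abel

/-- The abstract version of `V♯`. -/
def VsSet (T : V →L[ℝ] V) : Set (V × V) :=
  Set.range (BopL T Complex.I) ∩ Set.range (BopL T (-Complex.I))

lemma range_sub_mem {T : V →L[ℝ] V} {c : ℂ} {x y : V × V}
    (hx : x ∈ Set.range (BopL T c)) (hy : y ∈ Set.range (BopL T c)) :
    x - y ∈ Set.range (BopL T c) := by
  obtain ⟨u, hu⟩ := hx; obtain ⟨v, hv⟩ := hy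
  exact ⟨u - v, by rw [map_sub, hu, hv]⟩

lemma range_add_mem {T : V →L[ℝ] V} {c : ℂ} {x y : V × V}
    (hx : x ∈ Set.range (BopL T c)) (hy : y ∈ Set.range (BopL T c)) :
    x + y ∈ Set.range (BopL T c) := by
  obtain ⟨u, hu⟩ := hx; obtain ⟨v, hv⟩ := hy
  exact ⟨u + v, by rw [map_add, hu, hv]⟩

lemma range_csmul_mem {T : V →L[ℝ] V} {c : ℂ} (d : ℂ) {x : V × V}
    (hx : x ∈ Set.range (BopL T c)) : csmul d x ∈ Set.range (BopL T c) := by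
  obtain ⟨u, hu⟩ := hx
  exact ⟨csmul d u, by rw [BopL_csmul, hu]⟩

lemma Vs_sub_mem {T : V →L[ℝ] V} {x y : V × V} (hx : x ∈ VsSet T) (hy : y ∈ VsSet T) :
    x - y ∈ VsSet T :=
  ⟨range_sub_mem hx.1 hy.1, range_sub_mem hx.2 hy.2⟩

lemma Vs_add_mem {T : V →L[ℝ] V} {x y : V × V} (hx : x ∈ VsSet T) (hy : y ∈ VsSet T) :
    x + y ∈ VsSet T :=
  ⟨range_add_mem hx.1 hy.1, range_add_mem hx.2 hy.2⟩

lemma Vs_csmul_mem {T : V →L[ℝ] V} (d : ℂ) {x : V × V} (hx : x ∈ VsSet T) :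
    csmul d x ∈ VsSet T :=
  ⟨range_csmul_mem d hx.1, range_csmul_mem d hx.2⟩

lemma w_eq_I (T : V →L[ℝ] V) (w : V × V) :
    w = csmul Complex.I (TcL T w) - BopL T Complex.I w := by
  rw [BopL_apply]; abel

lemma w_eq_negI (T : V →L[ℝ] V) (w : V × V) :
    w = csmul (-Complex.I) (TcL T w) - BopL T (-Complex.I) w := by
  rw [BopL_apply]; abel

lemma Tc_eq_I (T : V →L[ℝ] V) (w : V × V) :
    TcL T w = csmul (-Complex.I) (BopL T Complex.I w + w) := by
  rw [BopL_apply, csmul_add', csmul_sub', csmul_csmul]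
  simp [one_csmul]

lemma Tc_eq_negI (T : V →L[ℝ] V) (w : V × V) :
    TcL T w = csmul Complex.I (BopL T (-Complex.I) w + w) := by
  rw [BopL_apply, csmul_add', csmul_sub', csmul_csmul]
  simp [one_csmul]

lemma mem_Vs_Tc {T : V →L[ℝ] V} (w : V × V) : w ∈ VsSet T ↔ TcL T w ∈ VsSet T := by
  constructor
  · intro hw
    constructor
    · rw [Tc_eq_I]
      exact range_csmul_mem _ (range_add_mem ⟨w, rfl⟩ hw.1)
    · rw [Tc_eq_negI]
      exact range_csmul_mem _ (range_add_mem ⟨w, rfl⟩ hw.2)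
  · intro hTw
    constructor
    · rw [w_eq_I T w]
      exact range_sub_mem (range_csmul_mem _ hTw.1) ⟨w, rfl⟩
    · rw [w_eq_negI T w]
      exact range_sub_mem (range_csmul_mem _ hTw.2) ⟨w, rfl⟩

lemma Bop_mem_Vs {T : V →L[ℝ] V} (c : ℂ) {w : V × V} (hw : w ∈ VsSet T) :
    BopL T c w ∈ VsSet T := by
  rw [BopL_apply]
  exact Vs_sub_mem (Vs_csmul_mem c ((mem_Vs_Tc w).1 hw)) hw

end NormedCsmul

section MoreCsmul

variable {W : Type*} [AddCommGroup W] [Module ℝ W]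

lemma add_csmul (c d : ℂ) (x : W × W) : csmul (c + d) x = csmul c x + csmul d x := by
  simp only [csmul, Complex.add_re, Complex.add_im, Prod.ext_iff, Prod.fst_add, Prod.snd_add]
  constructor <;> module

lemma real_mul_csmul (r : ℝ) (c : ℂ) (x : W × W) :
    csmul ((r : ℂ) * c) x = r • csmul c x := by
  rw [← csmul_csmul, real_csmul]

lemma conjC_rsmul (r : ℝ) (x : W × W) : conjC (r • x) = r • conjC x := by
  simp [conjC, Prod.ext_iff]

end MoreCsmul

section Abstract

variable {V : Type*} [NormedAddCommGroup V] [NormedSpace ℝ V] [CompleteSpace V]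

lemma conj_range_iff (T : V →L[ℝ] V) (x : V × V) :
    x ∈ Set.range (BopL T (-Complex.I)) ↔ conjC x ∈ Set.range (BopL T Complex.I) := by
  constructor
  · rintro ⟨y, rfl⟩
    refine ⟨conjC y, ?_⟩
    rw [BopL_conjC, Complex.conj_I]
  · rintro ⟨y, hy⟩
    refine ⟨conjC y, ?_⟩
    have h1 : BopL T (-Complex.I) (conjC y) = conjC (BopL T Complex.I y) := by
      rw [BopL_conjC, map_neg, Complex.conj_I, neg_neg]
    rw [h1, hy, conjC_conjC]

lemma conjC_Vs (T : V →L[ℝ] V) (x : V × V) : x ∈ VsSet T ↔ conjC x ∈ VsSet T := by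
  constructor
  · rintro ⟨h1, h2⟩
    refine ⟨(conj_range_iff T x).mp h2, ?_⟩
    rw [conj_range_iff, conjC_conjC]
    exact h1
  · rintro ⟨h1, h2⟩
    constructor
    · have := (conj_range_iff T (conjC x)).mp h2
      rwa [conjC_conjC] at this
    · exact (conj_range_iff T x).mpr h1

lemma csmul_chi_range {T : V →L[ℝ] V} {χ : V × V}
    (hnr : χ ∉ Set.range (BopL T Complex.I)) (c : ℂ)
    (h : csmul c χ ∈ Set.range (BopL T Complex.I)) : c = 0 := by
  by_contra hc
  apply hnr
  have := range_csmul_mem c⁻¹ h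
  rwa [csmul_csmul, inv_mul_cancel₀ hc, one_csmul] at this

lemma Tc_chi {T : V →L[ℝ] V} {χ : V × V} (hk0 : BopL T Complex.I χ = 0) :
    TcL T χ = csmul (-Complex.I) χ := by
  rw [Tc_eq_I, hk0, zero_add]

lemma BopnegI_chi {T : V →L[ℝ] V} {χ : V × V} (hk0 : BopL T Complex.I χ = 0) :
    BopL T (-Complex.I) χ = (-2 : ℝ) • χ := by
  rw [BopL_apply, Tc_chi hk0, csmul_csmul]
  have h1 : (-Complex.I) * (-Complex.I) = ((-1 : ℝ) : ℂ) := by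
    rw [neg_mul_neg, Complex.I_mul_I]; norm_num
  rw [h1, real_csmul]
  module

lemma chi_mem_negI {T : V →L[ℝ] V} {χ : V × V} (hk0 : BopL T Complex.I χ = 0) :
    χ ∈ Set.range (BopL T (-Complex.I)) := by
  refine ⟨(-2 : ℝ)⁻¹ • χ, ?_⟩
  rw [_root_.map_smul, BopnegI_chi hk0, smul_smul]
  norm_num

lemma chi'_BopI {T : V →L[ℝ] V} {χ : V × V} (hk0 : BopL T Complex.I χ = 0) :
    BopL T Complex.I (conjC χ) = (-2 : ℝ) • conjC χ := by
  rw [BopL_conjC, Complex.conj_I, BopnegI_chi hk0, conjC_rsmul]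

lemma chi'_mem_rangeI {T : V →L[ℝ] V} {χ : V × V} (hk0 : BopL T Complex.I χ = 0) :
    conjC χ ∈ Set.range (BopL T Complex.I) :=
  (conj_range_iff T χ).mp (chi_mem_negI hk0)

lemma chi'_nr {T : V →L[ℝ] V} {χ : V × V} (hnr : χ ∉ Set.range (BopL T Complex.I)) :
    conjC χ ∉ Set.range (BopL T (-Complex.I)) := by
  intro h
  apply hnr
  have := (conj_range_iff T (conjC χ)).mp h
  rwa [conjC_conjC] at this

lemma csmul_chi'_range {T : V →L[ℝ] V} {χ : V × V}
    (hnr : χ ∉ Set.range (BopL T Complex.I)) (c : ℂ)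
    (h : csmul c (conjC χ) ∈ Set.range (BopL T (-Complex.I))) : c = 0 := by
  by_contra hc
  apply chi'_nr hnr
  have := h
  obtain ⟨y, hy⟩ := this
  refine ⟨csmul c⁻¹ y, ?_⟩
  rw [BopL_csmul, hy, csmul_csmul, inv_mul_cancel₀ hc, one_csmul]

lemma hdec_negI {T : V →L[ℝ] V} {χ : V × V}
    (hdec : ∀ v : V × V, ∃ c : ℂ, v - csmul c χ ∈ Set.range (BopL T Complex.I)) :
    ∀ v : V × V, ∃ c : ℂ, v - csmul c (conjC χ) ∈ Set.range (BopL T (-Complex.I)) := by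
  intro v
  obtain ⟨c, hc⟩ := hdec (conjC v)
  refine ⟨starRingEnd ℂ c, ?_⟩
  rw [conj_range_iff]
  have : conjC (v - csmul (starRingEnd ℂ c) (conjC χ)) = conjC v - csmul c χ := by
    rw [conjC_sub', conjC_csmul, Complex.conj_conj, conjC_conjC]
  rwa [this]

lemma injI {T : V →L[ℝ] V} {χ : V × V}
    (hnr : χ ∉ Set.range (BopL T Complex.I))
    (hker : ∀ x, BopL T Complex.I x = 0 → ∃ c : ℂ, x = csmul c χ) :
    ∀ w ∈ VsSet T, BopL T Complex.I w = 0 → w = 0 := by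
  intro w hw h0
  obtain ⟨c, rfl⟩ := hker w h0
  rw [csmul_chi_range hnr c hw.1, zero_csmul]

lemma surjI {T : V →L[ℝ] V} {χ : V × V}
    (hk0 : BopL T Complex.I χ = 0)
    (hnr : χ ∉ Set.range (BopL T Complex.I))
    (hdec : ∀ v : V × V, ∃ c : ℂ, v - csmul c χ ∈ Set.range (BopL T Complex.I)) :
    ∀ v ∈ VsSet T, ∃ w ∈ VsSet T, BopL T Complex.I w = v := by
  intro v hv
  obtain ⟨w₀, hw₀⟩ := hv.1
  obtain ⟨c, hc⟩ := hdec w₀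
  have hBw₁ : BopL T Complex.I (w₀ - csmul c χ) = v := by
    rw [map_sub, BopL_csmul, hk0, csmul_zero', sub_zero, hw₀]
  obtain ⟨d, hd⟩ := hdec_negI hdec (w₀ - csmul c χ)
  set w₂ := w₀ - csmul c χ - csmul d (conjC χ) with hw₂def
  have hw₂I : w₂ ∈ Set.range (BopL T Complex.I) :=
    range_sub_mem hc (range_csmul_mem d (chi'_mem_rangeI hk0))
  have hw₂Vs : w₂ ∈ VsSet T := ⟨hw₂I, hd⟩
  have hBw₂ : BopL T Complex.I w₂ = v - (-2 : ℝ) • csmul d (conjC χ) := by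
    rw [hw₂def, map_sub, hBw₁, BopL_csmul, chi'_BopI hk0, csmul_rsmul]
  have hmemVs : BopL T Complex.I w₂ ∈ VsSet T := Bop_mem_Vs _ hw₂Vs
  have heq : (-2 : ℝ) • csmul d (conjC χ) = v - BopL T Complex.I w₂ := by
    rw [hBw₂]; abel
  have hmem2 : (-2 : ℝ) • csmul d (conjC χ) ∈ Set.range (BopL T (-Complex.I)) := by
    rw [heq]; exact range_sub_mem hv.2 hmemVs.2
  have hd0 : d = 0 := by
    have h1 : (-2 : ℝ) • csmul d (conjC χ) = csmul (((-2 : ℝ) : ℂ) * d) (conjC χ) := by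
      rw [real_mul_csmul]
    rw [h1] at hmem2
    have hmul := csmul_chi'_range hnr _ hmem2
    rcases mul_eq_zero.mp hmul with h | h
    · norm_num at h
    · exact h
  have : w₂ = w₀ - csmul c χ := by rw [hw₂def, hd0, zero_csmul, sub_zero]
  refine ⟨w₀ - csmul c χ, ?_, hBw₁⟩
  rwa [this] at hw₂Vs

lemma boundI {T : V →L[ℝ] V} {χ : V × V}
    (hχ : χ ≠ 0)
    (hk0 : BopL T Complex.I χ = 0)
    (hker : ∀ x, BopL T Complex.I x = 0 → ∃ c : ℂ, x = csmul c χ)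
    (hnr : χ ∉ Set.range (BopL T Complex.I))
    (hdec : ∀ v : V × V, ∃ c : ℂ, v - csmul c χ ∈ Set.range (BopL T Complex.I)) :
    ∃ C : ℝ, 0 ≤ C ∧ ∀ w ∈ VsSet T, ‖w‖ ≤ C * ‖BopL T Complex.I w‖ := by
  obtain ⟨g, hg1, hg2⟩ := exists_dual_vector ℝ χ (norm_ne_zero_iff.mpr hχ)
  set ζ : V × V → ℂ := fun x => (g x : ℂ) - (g (csmul Complex.I x) : ℂ) * Complex.I
    with hζdef
  have ζ_add : ∀ x y, ζ (x + y) = ζ x + ζ y := by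
    intro x y
    simp only [hζdef, csmul_add', map_add]
    push_cast; ring
  have ζ_smul : ∀ (r : ℝ) (x : V × V), ζ (r • x) = (r : ℂ) * ζ x := by
    intro r x
    simp only [hζdef, csmul_rsmul, _root_.map_smul, smul_eq_mul]
    push_cast; ring
  have ζ_I : ∀ x, ζ (csmul Complex.I x) = Complex.I * ζ x := by
    intro x
    have h1 : csmul Complex.I (csmul Complex.I x) = -x := by
      rw [csmul_csmul, Complex.I_mul_I, show ((-1 : ℂ)) = ((-1 : ℝ) : ℂ) by norm_num,
        real_csmul, neg_one_smul]
    simp only [hζdef, h1, map_neg]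
    push_cast
    ring_nf
    rw [Complex.I_sq]
    ring
  have ζ_csmul : ∀ (c : ℂ) (x : V × V), ζ (csmul c x) = c * ζ x := by
    intro c x
    rw [csmul_eq_smul_add c x, ζ_add, ζ_smul, ζ_smul, ζ_I]
    have hri := Complex.re_add_im c
    linear_combination (ζ x) * hri
  set z : ℂ := ζ χ with hzdef
  have hzre : z.re = ‖χ‖ := by
    simp [hzdef, hζdef, Complex.sub_re, Complex.mul_re, hg2]
  have hz : z ≠ 0 := by
    intro h
    have hχn : ‖χ‖ ≠ 0 := norm_ne_zero_iff.mpr hχ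
    rw [h] at hzre
    simp at hzre
    exact hχn hzre.symm
  have habsz : 0 < ‖z‖ := norm_pos_iff.mpr hz
  have ζ_bound : ∀ x, ‖ζ x‖ ≤ 2 * ‖x‖ := by
    intro x
    have tri : ‖ζ x‖ ≤
        ‖(g x : ℂ)‖ + ‖(g (csmul Complex.I x) : ℂ) * Complex.I‖ := by
      simp only [hζdef]
      exact norm_sub_le _ _
    have e1 : ‖(g x : ℂ)‖ = |g x| := by rw [Complex.norm_real, Real.norm_eq_abs]
    have e2 : ‖(g (csmul Complex.I x) : ℂ) * Complex.I‖
        = |g (csmul Complex.I x)| := by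
      rw [norm_mul, Complex.norm_I, Complex.norm_real, Real.norm_eq_abs, mul_one]
    have b1 : |g x| ≤ ‖x‖ := by
      have := g.le_opNorm x
      rw [hg1, one_mul] at this
      exact (Real.norm_eq_abs (g x)) ▸ this
    have b2 : |g (csmul Complex.I x)| ≤ ‖x‖ := by
      have := g.le_opNorm (csmul Complex.I x)
      rw [hg1, one_mul, norm_csmul_I] at this
      exact (Real.norm_eq_abs _) ▸ this
    rw [e1, e2] at tri
    linarith
  have hQbound : ∀ x : V × V, ‖csmul (ζ x / z) χ‖ ≤ (4 * ‖χ‖ / ‖z‖) * ‖x‖ := by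
    intro x
    calc ‖csmul (ζ x / z) χ‖ ≤ 2 * ‖ζ x / z‖ * ‖χ‖ := norm_csmul_le _ _
      _ = 2 * ‖ζ x‖ / ‖z‖ * ‖χ‖ := by rw [norm_div]; ring
      _ ≤ 2 * (2 * ‖x‖) / ‖z‖ * ‖χ‖ := by gcongr; exact ζ_bound x
      _ = (4 * ‖χ‖ / ‖z‖) * ‖x‖ := by ring
  set Q : (V × V) →L[ℝ] (V × V) := LinearMap.mkContinuous
    { toFun := fun x => csmul (ζ x / z) χ
      map_add' := fun x y => by
        show csmul (ζ (x + y) / z) χ = csmul (ζ x / z) χ + csmul (ζ y / z) χ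
        rw [ζ_add, add_div, add_csmul]
      map_smul' := fun r x => by
        show csmul (ζ (r • x) / z) χ = r • csmul (ζ x / z) χ
        rw [ζ_smul, mul_div_assoc, real_mul_csmul] }
    (4 * ‖χ‖ / ‖z‖) hQbound with hQdef
  have Q_apply : ∀ x, Q x = csmul (ζ x / z) χ := fun x => rfl
  have Q_fix : ∀ c : ℂ, Q (csmul c χ) = csmul c χ := by
    intro c
    rw [Q_apply, ζ_csmul, ← hzdef, mul_div_assoc, div_self hz, mul_one]
  have Q_kerB : ∀ x, BopL T Complex.I (Q x) = 0 := by
    intro x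
    rw [Q_apply, BopL_csmul, hk0, csmul_zero']
  set C1 : (V × V) →L[ℝ] (V × V) := BopL T Complex.I + Q with hC1def
  have hC1app : ∀ x, C1 x = BopL T Complex.I x + Q x := fun _ => rfl
  have C1_ker : ∀ x, C1 x = 0 → x = 0 := by
    intro x hx
    have h0 : BopL T Complex.I x + Q x = 0 := by rw [← hC1app]; exact hx
    have h1 : BopL T Complex.I x = - Q x := eq_neg_of_add_eq_zero_left h0
    have h2 : Q x ∈ Set.range (BopL T Complex.I) :=
      ⟨-x, by rw [map_neg, h1, neg_neg]⟩
    have h3 : (ζ x / z) = 0 := by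
      apply csmul_chi_range hnr
      rw [← Q_apply]; exact h2
    have hQx : Q x = 0 := by rw [Q_apply, h3, zero_csmul]
    have hBx : BopL T Complex.I x = 0 := by rw [h1, hQx, neg_zero]
    obtain ⟨c, rfl⟩ := hker x hBx
    calc csmul c χ = Q (csmul c χ) := (Q_fix c).symm
      _ = 0 := hQx
  have C1_inj : Function.Injective C1 := by
    intro a b hab
    have : C1 (a - b) = 0 := by rw [map_sub, hab, sub_self]
    have := C1_ker _ this
    exact sub_eq_zero.mp this
  have C1_surj : Function.Surjective C1 := by
    intro v
    obtain ⟨c, hc⟩ := hdec v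
    obtain ⟨w₀, hw₀⟩ := hc
    refine ⟨w₀ - Q w₀ + csmul c χ, ?_⟩
    have hQw₀ : ∃ c₀ : ℂ, Q w₀ = csmul c₀ χ := ⟨ζ w₀ / z, Q_apply w₀⟩
    obtain ⟨c₀, hc₀⟩ := hQw₀
    have hB : BopL T Complex.I (w₀ - Q w₀ + csmul c χ) = BopL T Complex.I w₀ := by
      rw [map_add, map_sub, hc₀, BopL_csmul, BopL_csmul, hk0, csmul_zero', csmul_zero']
      abel
    have hQ : Q (w₀ - Q w₀ + csmul c χ) = csmul c χ := by
      rw [map_add, map_sub, hc₀, Q_fix, Q_fix]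
      abel
    rw [hC1app, hB, hQ, hw₀]
    abel
  obtain ⟨e1, he1⟩ : ∃ e : (V × V) ≃L[ℝ] (V × V), ∀ x, e x = C1 x :=
    ⟨ContinuousLinearEquiv.ofBijective C1 (LinearMap.ker_eq_bot.mpr C1_inj)
      (LinearMap.range_eq_top.mpr C1_surj), fun x => rfl⟩
  set P : (V × V) →L[ℝ] (V × V) :=
    (BopL T Complex.I).comp (e1.symm : (V × V) →L[ℝ] (V × V)) with hPdef
  have hPapp : ∀ v, P v = BopL T Complex.I (e1.symm v) := fun _ => rfl
  have hPdec : ∀ v, v - P v = Q (e1.symm v) := by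
    intro v
    have h2 : C1 (e1.symm v) = v := by rw [← he1]; exact e1.apply_symm_apply v
    calc v - P v = C1 (e1.symm v) - BopL T Complex.I (e1.symm v) := by
          rw [h2, hPapp]
      _ = Q (e1.symm v) := by rw [hC1app]; abel
  have P_mem : ∀ v, P v ∈ Set.range (BopL T Complex.I) := fun v => ⟨e1.symm v, (hPapp v).symm⟩
  have P_fix : ∀ v ∈ Set.range (BopL T Complex.I), P v = v := by
    intro v hv
    have h1 : v - P v ∈ Set.range (BopL T Complex.I) := range_sub_mem hv (P_mem v)
    have h2 : v - P v = csmul (ζ (e1.symm v) / z) χ := by rw [hPdec v, Q_apply]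
    have h3 : (ζ (e1.symm v) / z) = 0 := csmul_chi_range hnr _ (h2 ▸ h1)
    have h4 : v - P v = 0 := by rw [h2, h3, zero_csmul]
    have := sub_eq_zero.mp h4
    exact this.symm
  -- conjugation as a continuous linear map
  set cjL : (V × V) →L[ℝ] (V × V) :=
    (ContinuousLinearMap.fst ℝ V V).prod (-(ContinuousLinearMap.snd ℝ V V)) with hcjLdef
  have cjL_apply : ∀ x, cjL x = conjC x := fun _ => rfl
  set P' : (V × V) →L[ℝ] (V × V) := cjL.comp (P.comp cjL) with hP'def
  have hP'app : ∀ v, P' v = conjC (P (conjC v)) := fun _ => rfl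
  have P'_mem : ∀ v, P' v ∈ Set.range (BopL T (-Complex.I)) := by
    intro v
    rw [conj_range_iff, hP'app, conjC_conjC]
    exact P_mem _
  have P'_fix : ∀ v ∈ Set.range (BopL T (-Complex.I)), P' v = v := by
    intro v hv
    rw [hP'app, P_fix _ ((conj_range_iff T v).mp hv), conjC_conjC]
  have hP'dec : ∀ v, ∃ c : ℂ, v - P' v = csmul c (conjC χ) := by
    intro v
    refine ⟨starRingEnd ℂ (ζ (e1.symm (conjC v)) / z), ?_⟩
    have h := hPdec (conjC v)
    have h2 : conjC (conjC v - P (conjC v)) = v - P' v := by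
      rw [conjC_sub', conjC_conjC, hP'app]
    rw [← h2, h, Q_apply, conjC_csmul]
  set Pi : (V × V) →L[ℝ] (V × V) := P'.comp P with hPidef
  have hPiapp : ∀ v, Pi v = P' (P v) := fun _ => rfl
  have Pi_mem : ∀ v, Pi v ∈ VsSet T := by
    intro v
    constructor
    · obtain ⟨c, hc⟩ := hP'dec (P v)
      have h1 : P' (P v) = P v - csmul c (conjC χ) := by rw [← hc]; abel
      rw [hPiapp, h1]
      exact range_sub_mem (P_mem v) (range_csmul_mem c (chi'_mem_rangeI hk0))
    · rw [hPiapp]; exact P'_mem _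
  have Pi_fix : ∀ w ∈ VsSet T, Pi w = w := by
    intro w hw
    rw [hPiapp, P_fix w hw.1, P'_fix w hw.2]
  have Pi_dec : ∀ v, ∃ a b : ℂ, v - Pi v = csmul a χ + csmul b (conjC χ) := by
    intro v
    obtain ⟨b, hb⟩ := hP'dec (P v)
    refine ⟨ζ (e1.symm v) / z, b, ?_⟩
    have h1 : v - P v = csmul (ζ (e1.symm v) / z) χ := by rw [hPdec v, Q_apply]
    have h2 : v - Pi v = (v - P v) + (P v - P' (P v)) := by rw [hPiapp]; abel
    rw [h2, h1, hb]
  set C2 : (V × V) →L[ℝ] (V × V) :=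
    (BopL T Complex.I).comp Pi + (ContinuousLinearMap.id ℝ (V × V) - Pi) with hC2def
  have hC2app : ∀ v, C2 v = BopL T Complex.I (Pi v) + (v - Pi v) := fun _ => rfl
  have Vs_zero : (0 : V × V) ∈ VsSet T := ⟨⟨0, map_zero _⟩, ⟨0, map_zero _⟩⟩
  have pp'_zero : ∀ a b : ℂ, csmul a χ + csmul b (conjC χ) ∈ VsSet T →
      csmul a χ + csmul b (conjC χ) = 0 := by
    intro a b h
    have ha : csmul a χ ∈ Set.range (BopL T Complex.I) := by
      have h1 := range_sub_mem h.1 (range_csmul_mem b (chi'_mem_rangeI hk0))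
      have h2 : csmul a χ + csmul b (conjC χ) - csmul b (conjC χ) = csmul a χ := by abel
      rwa [h2] at h1
    have ha0 : a = 0 := csmul_chi_range hnr a ha
    have hb : csmul b (conjC χ) ∈ Set.range (BopL T (-Complex.I)) := by
      have h1 : csmul a χ = 0 := by rw [ha0, zero_csmul]
      have h2 := h.2
      rw [h1, zero_add] at h2
      exact h2
    have hb0 : b = 0 := csmul_chi'_range hnr b hb
    rw [ha0, hb0, zero_csmul, zero_csmul, add_zero]
  have C2_ker : ∀ v, C2 v = 0 → v = 0 := by
    intro v hv
    obtain ⟨a, b, hab⟩ := Pi_dec v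
    have h0 : BopL T Complex.I (Pi v) + (v - Pi v) = 0 := by rw [← hC2app]; exact hv
    have h1 : BopL T Complex.I (Pi v) = -(csmul a χ + csmul b (conjC χ)) := by
      rw [← hab]
      exact eq_neg_of_add_eq_zero_left h0
    have h2 : BopL T Complex.I (Pi v) ∈ VsSet T := Bop_mem_Vs _ (Pi_mem v)
    have h3 : csmul a χ + csmul b (conjC χ) ∈ VsSet T := by
      have h4 : csmul a χ + csmul b (conjC χ) = (0 : V × V) - BopL T Complex.I (Pi v) := by
        rw [h1]; abel
      rw [h4]
      exact Vs_sub_mem Vs_zero h2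
    have h4 := pp'_zero a b h3
    have h5 : BopL T Complex.I (Pi v) = 0 := by rw [h1, h4, neg_zero]
    have h6 : Pi v = 0 := injI hnr hker (Pi v) (Pi_mem v) h5
    have h7 : v - Pi v = 0 := by rw [hab, h4]
    exact (sub_eq_zero.mp h7).trans h6
  have C2_inj : Function.Injective C2 := by
    intro x y hxy
    have : C2 (x - y) = 0 := by rw [map_sub, hxy, sub_self]
    exact sub_eq_zero.mp (C2_ker _ this)
  have C2_surj : Function.Surjective C2 := by
    intro v
    obtain ⟨w₁, hw₁Vs, hw₁⟩ := surjI hk0 hnr hdec (Pi v) (Pi_mem v)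
    refine ⟨w₁ + (v - Pi v), ?_⟩
    have hPiu : Pi (w₁ + (v - Pi v)) = w₁ := by
      rw [map_add, map_sub, Pi_fix w₁ hw₁Vs, Pi_fix (Pi v) (Pi_mem v)]
      abel
    rw [hC2app, hPiu, hw₁]
    abel
  obtain ⟨e2, he2⟩ : ∃ e : (V × V) ≃L[ℝ] (V × V), ∀ x, e x = C2 x :=
    ⟨ContinuousLinearEquiv.ofBijective C2 (LinearMap.ker_eq_bot.mpr C2_inj)
      (LinearMap.range_eq_top.mpr C2_surj), fun x => rfl⟩
  refine ⟨‖(e2.symm : (V × V) →L[ℝ] (V × V))‖, norm_nonneg _, ?_⟩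
  intro w hw
  have h1 : C2 w = BopL T Complex.I w := by
    rw [hC2app, Pi_fix w hw]
    abel
  have h2 : e2.symm (C2 w) = w := by rw [← he2]; exact e2.symm_apply_apply w
  calc ‖w‖ = ‖e2.symm (C2 w)‖ := by rw [h2]
    _ = ‖(e2.symm : (V × V) →L[ℝ] (V × V)) (C2 w)‖ := by rw [ContinuousLinearEquiv.coe_coe]
    _ ≤ ‖(e2.symm : (V × V) →L[ℝ] (V × V))‖ * ‖C2 w‖ :=
        (e2.symm : (V × V) →L[ℝ] (V × V)).le_opNorm _
    _ = ‖(e2.symm : (V × V) →L[ℝ] (V × V))‖ * ‖BopL T Complex.I w‖ := by rw [h1]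

/-- The abstract master lemma. -/
theorem abstract_main (T : V →L[ℝ] V) (χ : V × V)
    (hχ : χ ≠ 0) (hk0 : BopL T Complex.I χ = 0)
    (hker : ∀ x, BopL T Complex.I x = 0 → ∃ c : ℂ, x = csmul c χ)
    (hnr : χ ∉ Set.range (BopL T Complex.I))
    (hdec : ∀ v : V × V, ∃ c : ℂ, v - csmul c χ ∈ Set.range (BopL T Complex.I))
    (hbij : ∀ k : ℤ, k ≠ 1 → k ≠ -1 → Function.Bijective (BopL T (Complex.I * (k : ℂ))))
    (n : ℤ) :
    (∀ w ∈ VsSet T, BopL T (Complex.I * (n : ℂ)) w ∈ VsSet T) ∧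
    (∀ w ∈ VsSet T, BopL T (Complex.I * (n : ℂ)) w = 0 → w = 0) ∧
    (∀ v ∈ VsSet T, ∃ w ∈ VsSet T, BopL T (Complex.I * (n : ℂ)) w = v) ∧
    (∃ C : ℝ, 0 ≤ C ∧ ∀ w ∈ VsSet T, ‖w‖ ≤ C * ‖BopL T (Complex.I * (n : ℂ)) w‖) := by
  refine ⟨fun w hw => Bop_mem_Vs _ hw, ?_⟩
  by_cases h1 : n = 1
  · subst h1
    have hcoef : Complex.I * ((1 : ℤ) : ℂ) = Complex.I := by push_cast; ring
    rw [hcoef]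
    exact ⟨injI hnr hker, surjI hk0 hnr hdec, boundI hχ hk0 hker hnr hdec⟩
  by_cases h2 : n = -1
  · subst h2
    have hcoef : Complex.I * ((-1 : ℤ) : ℂ) = -Complex.I := by push_cast; ring
    rw [hcoef]
    refine ⟨?_, ?_, ?_⟩
    · intro w hw h0
      have hcw : conjC w ∈ VsSet T := (conjC_Vs T w).1 hw
      have hcb : BopL T Complex.I (conjC w) = 0 := by
        rw [BopL_conjC, Complex.conj_I, h0, conjC_zero]
      exact conjC_eq_zero (injI hnr hker (conjC w) hcw hcb)
    · intro v hv
      obtain ⟨w', hw'Vs, hw'⟩ := surjI hk0 hnr hdec (conjC v) ((conjC_Vs T v).1 hv)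
      refine ⟨conjC w', (conjC_Vs T w').1 hw'Vs, ?_⟩
      have h3 : BopL T (-Complex.I) (conjC w') = conjC (BopL T Complex.I w') := by
        rw [BopL_conjC, map_neg, Complex.conj_I, neg_neg]
      rw [h3, hw', conjC_conjC]
    · obtain ⟨C, hC0, hC⟩ := boundI hχ hk0 hker hnr hdec
      refine ⟨C, hC0, fun w hw => ?_⟩
      have h3 : BopL T Complex.I (conjC w) = conjC (BopL T (-Complex.I) w) := by
        rw [BopL_conjC, Complex.conj_I]
      calc ‖w‖ = ‖conjC w‖ := (norm_conjC w).symm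
        _ ≤ C * ‖BopL T Complex.I (conjC w)‖ := hC _ ((conjC_Vs T w).1 hw)
        _ = C * ‖BopL T (-Complex.I) w‖ := by rw [h3, norm_conjC]
  · have hb := hbij n h1 h2
    obtain ⟨e, he⟩ : ∃ e : (V × V) ≃L[ℝ] (V × V), ∀ x, e x = BopL T (Complex.I * (n : ℂ)) x :=
      ⟨ContinuousLinearEquiv.ofBijective _ (LinearMap.ker_eq_bot.mpr hb.1)
        (LinearMap.range_eq_top.mpr hb.2), fun x => rfl⟩
    refine ⟨?_, ?_, ?_⟩
    · intro w _ h0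
      exact hb.1 (show BopL T (Complex.I * (n : ℂ)) w = BopL T (Complex.I * (n : ℂ)) 0 by
        rw [h0, map_zero])
    · intro v hv
      have hkey : ∀ (c : ℂ), v ∈ Set.range (BopL T c) →
          e.symm v ∈ Set.range (BopL T c) := by
        intro c hc
        obtain ⟨u, hu⟩ := hc
        refine ⟨e.symm u, ?_⟩
        apply e.injective
        rw [he, he]
        calc BopL T (Complex.I * (n : ℂ)) (BopL T c (e.symm u))
            = BopL T c (BopL T (Complex.I * (n : ℂ)) (e.symm u)) := BopL_comm T _ _ _
          _ = BopL T c (e (e.symm u)) := by rw [he]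
          _ = BopL T c u := by rw [e.apply_symm_apply]
          _ = v := hu
          _ = e (e.symm v) := (e.apply_symm_apply v).symm
          _ = BopL T (Complex.I * (n : ℂ)) (e.symm v) := he _
      refine ⟨e.symm v, ⟨hkey Complex.I hv.1, hkey (-Complex.I) hv.2⟩, ?_⟩
      rw [← he, e.apply_symm_apply]
    · refine ⟨‖(e.symm : (V × V) →L[ℝ] (V × V))‖, norm_nonneg _, ?_⟩
      intro w _
      have h2 : e.symm (BopL T (Complex.I * (n : ℂ)) w) = w := by
        rw [← he]; exact e.symm_apply_apply w
      calc ‖w‖ = ‖(e.symm : (V × V) →L[ℝ] (V × V)) (BopL T (Complex.I * (n : ℂ)) w)‖ := by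
            rw [ContinuousLinearEquiv.coe_coe, h2]
        _ ≤ ‖(e.symm : (V × V) →L[ℝ] (V × V))‖ * ‖BopL T (Complex.I * (n : ℂ)) w‖ :=
            (e.symm : (V × V) →L[ℝ] (V × V)).le_opNorm _

end Abstract

/-- **Proposition 3.4 (iii).** Assume (H2) and (H4).  Then `iℤ ⊆ ρ(A♯)`: for every `n ∈ ℤ`
the operator `in - A♯` is a bijection from `V♯ ∩ 𝒟(A_c)` onto `V♯`, with bounded inverse.
(Here `A♯ = A_c|_{V♯}` and `V♯ = ℛ(i - A_c) ∩ ℛ(-i - A_c)`.) -/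
theorem iZ_subset_resolvent_Asharp
    {V : Type*} [NormedAddCommGroup V] [NormedSpace ℝ V] [CompleteSpace V]
    {U : Type*} [NormedAddCommGroup U] [NormedSpace ℝ U] [CompleteSpace U]
    (ι A : U →L[ℝ] V) (hι : Function.Injective ι)
    (hUnorm : ∀ u : U, ‖u‖ = ‖A u‖) (hAbij : Function.Bijective A)
    (hH2 : H2hyp ι A) (hH4 : H4hyp ι A) :
    ∀ n : ℤ,
      -- `in - A♯` maps `V♯ ∩ 𝒟(A_c)` into `V♯`:
      (∀ ψ : U × U, iotaC ι ψ ∈ Vsharp ι A →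
        cMinusA ι A (Complex.I * (n : ℂ)) ψ ∈ Vsharp ι A) ∧
      -- it is injective on `V♯ ∩ 𝒟(A_c)`:
      Set.InjOn (cMinusA ι A (Complex.I * (n : ℂ)))
        {ψ : U × U | iotaC ι ψ ∈ Vsharp ι A} ∧
      -- it is onto `V♯`:
      (∀ v ∈ Vsharp ι A, ∃ ψ : U × U,
        iotaC ι ψ ∈ Vsharp ι A ∧ cMinusA ι A (Complex.I * (n : ℂ)) ψ = v) ∧
      -- and its inverse is bounded:
      ∃ C : ℝ, ∀ ψ : U × U, iotaC ι ψ ∈ Vsharp ι A →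
        ‖iotaC ι ψ‖ ≤ C * ‖cMinusA ι A (Complex.I * (n : ℂ)) ψ‖ := by
  intro n
  obtain ⟨⟨ψs, hψsk, hψsne, hψsspan⟩, ⟨χh, hχhnr, hχhdec⟩, hkr⟩ := hH2
  set A' : U ≃L[ℝ] V := ContinuousLinearEquiv.ofBijective A
    (LinearMap.ker_eq_bot.mpr hAbij.1) (LinearMap.range_eq_top.mpr hAbij.2) with hA'def
  set T : V →L[ℝ] V := ι.comp (A'.symm : V →L[ℝ] U) with hTdef
  set Ae : (U × U) ≃L[ℝ] V × V := A'.prodCongr A' with hAedef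
  have hAe : ∀ ψ : U × U, Ae ψ = (A ψ.1, A ψ.2) := fun ψ => rfl
  have hTA : ∀ ψ : U × U, TcL T (Ae ψ) = iotaC ι ψ := by
    intro ψ
    have h1 : ∀ u : U, T (A u) = ι u := by
      intro u
      show ι (A'.symm (A u)) = ι u
      congr 1
      have h2 : A u = A' u := rfl
      rw [h2, A'.symm_apply_apply]
    show (T (A ψ.1), T (A ψ.2)) = (ι ψ.1, ι ψ.2)
    rw [h1, h1]
  have htrans : ∀ (c : ℂ) (ψ : U × U), cMinusA ι A c ψ = BopL T c (Ae ψ) := by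
    intro c ψ
    rw [BopL_apply, hTA, hAe]
    rfl
  have hrange : ∀ c : ℂ, Set.range (cMinusA ι A c) = Set.range (BopL T c) := by
    intro c
    ext v
    constructor
    · rintro ⟨ψ, rfl⟩
      exact ⟨Ae ψ, (htrans c ψ).symm⟩
    · rintro ⟨w, rfl⟩
      exact ⟨Ae.symm w, by rw [htrans, Ae.apply_symm_apply]⟩
  have hVs : Vsharp ι A = VsSet T := by
    unfold Vsharp VsSet
    rw [hrange, hrange]
  have Ae_csmul : ∀ (c : ℂ) (ψ : U × U), Ae (csmul c ψ) = csmul c (Ae ψ) := by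
    intro c ψ
    rw [hAe, hAe]
    simp [csmul, Prod.ext_iff, map_sub, map_add, _root_.map_smul]
  set χ : V × V := Ae ψs with hχdef
  have hχne : χ ≠ 0 := by
    intro h
    exact hψsne (Ae.injective (by rw [← hχdef, h, map_zero]))
  have hk0T : BopL T Complex.I χ = 0 := by
    rw [hχdef, ← htrans]
    exact hψsk
  have hkerT : ∀ x, BopL T Complex.I x = 0 → ∃ c : ℂ, x = csmul c χ := by
    intro x hx
    have h1 : cMinusA ι A Complex.I (Ae.symm x) = 0 := by
      rw [htrans, Ae.apply_symm_apply]
      exact hx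
    obtain ⟨c, hc⟩ := hψsspan (Ae.symm x) h1
    exact ⟨c, by rw [← Ae.apply_symm_apply x, hc, Ae_csmul, ← hχdef]⟩
  have hranIA : ranIA ι A = Set.range (BopL T Complex.I) := hrange Complex.I
  have hnrT : χ ∉ Set.range (BopL T Complex.I) := by
    intro h
    apply hkr ψs hψsk hψsne
    have h0 : csmul Complex.I (iotaC ι ψs) - AcC A ψs = 0 := hψsk
    have h1 : csmul Complex.I (iotaC ι ψs) = χ := by
      rw [sub_eq_zero] at h0
      rw [h0]
      rfl
    have hiota : iotaC ι ψs = csmul (-Complex.I) χ := by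
      rw [← h1, csmul_csmul, neg_mul, Complex.I_mul_I, neg_neg, one_csmul]
    have h2 : csmul (-Complex.I) χ ∈ Set.range (BopL T Complex.I) := range_csmul_mem _ h
    show iotaC ι ψs ∈ ranIA ι A
    rw [hiota, hranIA]
    exact h2
  have hdecT : ∀ v : V × V, ∃ c : ℂ, v - csmul c χ ∈ Set.range (BopL T Complex.I) := by
    obtain ⟨c₁, r₁, hr₁, hχeq⟩ := hχhdec χ
    have hc₁ : c₁ ≠ 0 := by
      intro h0
      apply hnrT
      rw [h0, zero_csmul, add_zero] at hχeq
      rw [hχeq, ← hranIA]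
      exact hr₁
    intro v
    obtain ⟨c, r, hrmem, hveq⟩ := hχhdec v
    refine ⟨c * c₁⁻¹, ?_⟩
    have hχh : csmul c₁ χh = χ - r₁ := by rw [hχeq]; abel
    have hkey : csmul c χh = csmul (c * c₁⁻¹) (χ - r₁) := by
      rw [← hχh, csmul_csmul]
      congr 1
      field_simp
    have hveq2 : v - csmul (c * c₁⁻¹) χ = r - csmul (c * c₁⁻¹) r₁ := by
      rw [hveq, hkey, csmul_sub']
      abel
    rw [hveq2]
    exact range_sub_mem (hranIA ▸ hrmem) (range_csmul_mem _ (hranIA ▸ hr₁))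
  have hbijT : ∀ k : ℤ, k ≠ 1 → k ≠ -1 →
      Function.Bijective (BopL T (Complex.I * (k : ℂ))) := by
    intro k h1 h2
    have hb := hH4 k h1 h2
    constructor
    · intro x y hxy
      have h3 : cMinusA ι A (Complex.I * (k : ℂ)) (Ae.symm x)
          = cMinusA ι A (Complex.I * (k : ℂ)) (Ae.symm y) := by
        rw [htrans, htrans, Ae.apply_symm_apply, Ae.apply_symm_apply]
        exact hxy
      have h4 := hb.1 h3
      calc x = Ae (Ae.symm x) := (Ae.apply_symm_apply x).symm
        _ = Ae (Ae.symm y) := by rw [h4]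
        _ = y := Ae.apply_symm_apply y
    · intro v
      obtain ⟨ψ, hψ⟩ := hb.2 v
      exact ⟨Ae ψ, by rw [← htrans]; exact hψ⟩
  obtain ⟨P1, P2, P3, C, hC0, hC⟩ :=
    abstract_main T χ hχne hk0T hkerT hnrT hdecT hbijT n
  have hdom : ∀ ψ : U × U, (iotaC ι ψ ∈ Vsharp ι A ↔ Ae ψ ∈ VsSet T) := by
    intro ψ
    rw [hVs, ← hTA ψ]
    exact (mem_Vs_Tc (Ae ψ)).symm
  refine ⟨?_, ?_, ?_, ?_⟩
  · intro ψ h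
    rw [hVs, htrans]
    exact P1 _ ((hdom ψ).1 h)
  · intro ψ hψ φ hφ heq
    have h1 : Ae ψ ∈ VsSet T := (hdom ψ).1 hψ
    have h2 : Ae φ ∈ VsSet T := (hdom φ).1 hφ
    have h3 : BopL T (Complex.I * (n : ℂ)) (Ae ψ - Ae φ) = 0 := by
      rw [map_sub, ← htrans, ← htrans, heq, sub_self]
    have h4 := P2 _ (Vs_sub_mem h1 h2) h3
    exact Ae.injective (sub_eq_zero.mp h4)
  · intro v hv
    rw [hVs] at hv
    obtain ⟨w, hwVs, hww⟩ := P3 v hv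
    refine ⟨Ae.symm w, ?_, ?_⟩
    · rw [hdom, Ae.apply_symm_apply]
      exact hwVs
    · rw [htrans, Ae.apply_symm_apply]
      exact hww
  · refine ⟨‖TcL T‖ * C, ?_⟩
    intro ψ hψ
    have h1 : Ae ψ ∈ VsSet T := (hdom ψ).1 hψ
    calc ‖iotaC ι ψ‖ = ‖TcL T (Ae ψ)‖ := by rw [hTA]
      _ ≤ ‖TcL T‖ * ‖Ae ψ‖ := (TcL T).le_opNorm _
      _ ≤ ‖TcL T‖ * (C * ‖BopL T (Complex.I * (n : ℂ)) (Ae ψ)‖) :=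
          mul_le_mul_of_nonneg_left (hC _ h1) (norm_nonneg _)
      _ = ‖TcL T‖ * C * ‖cMinusA ι A (Complex.I * (n : ℂ)) ψ‖ := by
          rw [htrans]; ring
end HopfStmt
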